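/- Let p and m + 1 be primes with m ≥ 1, p ≠ m + 1 and p ≢ 1 (mod m + 1), and set ℓ = (p^(m+1) − 1)/(p − 1) and q = (p^m − 1)/(p − 1). Let D be a finset of ZMod ℓ with cardinality q whose image under x ↦ p·x equals D, and let k = q/(m+1). Then there exists a function d : Fin k → ZMod ℓ such that the map (u, i) ↦ p^u · d(i), defined on Fin (m+1) × Fin k, is injective and its image is exactly the set D. In other words, the elements of D can be ordered in a Frobenius compatible way. -/

import Mathlib

private lemma geom_aux (p : ℕ) (hp : 2 ≤ p) :
    ∀ n, (p - 1) * ∑ i ∈ Finset.range n, p ^ i = p ^ n - 1 := by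
  intro n
  induction n with
  | zero => simp
  | succ n ih =>
    rw [Finset.sum_range_succ, Nat.mul_add, ih]
    have h1 : 1 ≤ p ^ n := Nat.one_le_pow _ _ (by omega)
    have h3 : p ^ (n + 1) = p * p ^ n := by rw [pow_succ, Nat.mul_comm]
    have h2 : p ^ n ≤ p * p ^ n := Nat.le_mul_of_pos_left _ (by omega)
    rw [Nat.sub_mul, one_mul, h3]
    generalize p * p ^ n = b at h2 ⊢
    generalize p ^ n = a at h1 h2 ⊢
    omega

private lemma peel {M : Type*} [CommMonoid M] [DecidableEq M] (P : M) (m : ℕ)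
    (hP : P ^ (m + 1) = 1) :
    ∀ (N : ℕ) (D : Finset M), D.card ≤ N → (∀ x ∈ D, P * x ∈ D) →
      (∀ x ∈ D, ∀ u, 0 < u → u ≤ m → P ^ u * x ≠ x) →
    ∃ (n : ℕ) (d : Fin n → M),
      D.card = (m + 1) * n ∧
      Function.Injective (fun ui : Fin (m + 1) × Fin n => P ^ (ui.1 : ℕ) * d ui.2) ∧
      Set.range (fun ui : Fin (m + 1) × Fin n => P ^ (ui.1 : ℕ) * d ui.2) = ↑D := by
  have hPunit : IsUnit P := IsUnit.of_mul_eq_one (P ^ m) (by rw [← pow_succ']; exact hP)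
  have hpowmod : ∀ a : ℕ, P ^ a = P ^ (a % (m + 1)) := by
    intro a
    conv_lhs => rw [← Nat.div_add_mod a (m + 1)]
    rw [pow_add, pow_mul, hP, one_pow, one_mul]
  have hempty : ∀ D : Finset M, D = ∅ →
      ∃ (n : ℕ) (d : Fin n → M),
      D.card = (m + 1) * n ∧
      Function.Injective (fun ui : Fin (m + 1) × Fin n => P ^ (ui.1 : ℕ) * d ui.2) ∧
      Set.range (fun ui : Fin (m + 1) × Fin n => P ^ (ui.1 : ℕ) * d ui.2) = ↑D := by
    rintro D rfl
    refine ⟨0, Fin.elim0, by simp, ?_, ?_⟩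
    · rintro ⟨u, i⟩
      exact i.elim0
    · ext y
      simp only [Set.mem_range, Finset.coe_empty, Set.mem_empty_iff_false, iff_false]
      rintro ⟨⟨u, i⟩, -⟩
      exact i.elim0
  intro N
  induction N with
  | zero =>
    intro D hcard _ _
    exact hempty D (Finset.card_eq_zero.mp (by omega))
  | succ N ih =>
    intro D hDcard hcl hnf
    rcases D.eq_empty_or_nonempty with rfl | ⟨x, hxD⟩
    · exact hempty ∅ rfl
    have hmemD : ∀ u : ℕ, P ^ u * x ∈ D := by
      intro u
      induction u with
      | zero => simpa using hxD
      | succ u ihu =>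
        have h := hcl _ ihu
        rwa [← mul_assoc, ← pow_succ'] at h
    have key : ∀ a b : ℕ, a ≤ b → b ≤ m → P ^ a * x = P ^ b * x → a = b := by
      intro a b hab hbm h
      by_contra hne'
      have hd : 0 < b - a := by omega
      have h1 : P ^ a * (P ^ (b - a) * x) = P ^ a * x := by
        rw [← mul_assoc, ← pow_add, Nat.add_sub_cancel' hab]
        exact h.symm
      have h2 : P ^ (b - a) * x = x := (hPunit.pow a).mul_right_injective h1
      exact hnf x hxD (b - a) hd (by omega) h2
    have horb : Function.Injective (fun u : Fin (m + 1) => P ^ (u : ℕ) * x) := by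
      intro a b hab
      simp only at hab
      have ha := a.isLt
      have hb := b.isLt
      rcases le_total (a : ℕ) (b : ℕ) with h | h
      · exact Fin.ext (key a b h (by omega) hab)
      · exact (Fin.ext (key b a h (by omega) hab.symm)).symm
    set O : Finset M := Finset.image (fun u : Fin (m + 1) => P ^ (u : ℕ) * x) Finset.univ
      with hO
    have hOsub : O ⊆ D := by
      intro y hy
      simp only [hO, Finset.mem_image] at hy
      obtain ⟨u, -, rfl⟩ := hy
      exact hmemD u
    have hOcard : O.card = m + 1 := by
      rw [hO, Finset.card_image_of_injective _ horb, Finset.card_univ, Fintype.card_fin]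
    have hmemO : ∀ a : ℕ, P ^ a * x ∈ O := by
      intro a
      rw [hpowmod a]
      simp only [hO, Finset.mem_image]
      exact ⟨⟨a % (m + 1), Nat.mod_lt _ (by omega)⟩, Finset.mem_univ _, rfl⟩
    have hxO : x ∈ O := by simpa using hmemO 0
    set D' := D \ O with hD'
    have hsum : D'.card + O.card = D.card := Finset.card_sdiff_add_card_eq_card hOsub
    have hcl' : ∀ y ∈ D', P * y ∈ D' := by
      intro y hy
      rw [hD', Finset.mem_sdiff] at hy ⊢
      refine ⟨hcl y hy.1, ?_⟩
      intro hPy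
      apply hy.2
      simp only [hO, Finset.mem_image] at hPy
      obtain ⟨u, -, hu⟩ := hPy
      have hy2 : y = P ^ (m + (u : ℕ)) * x := by
        have h1 : P ^ m * (P * y) = P ^ m * (P ^ (u : ℕ) * x) := by rw [hu]
        rw [← mul_assoc, ← pow_succ, hP, one_mul, ← mul_assoc, ← pow_add] at h1
        exact h1
      rw [hy2]
      exact hmemO _
    have hnf' : ∀ y ∈ D', ∀ u, 0 < u → u ≤ m → P ^ u * y ≠ y :=
      fun y hy => hnf y (Finset.mem_sdiff.mp hy).1
    have hD'card : D'.card ≤ N := by omega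
    obtain ⟨n, d', hcard', hinj', hrange'⟩ := ih D' hD'card hcl' hnf'
    have hmemD'ran : ∀ (u : Fin (m + 1)) (i : Fin n), P ^ (u : ℕ) * d' i ∈ D' := by
      intro u i
      have h : P ^ (u : ℕ) * d' i ∈
          Set.range (fun ui : Fin (m + 1) × Fin n => P ^ (ui.1 : ℕ) * d' ui.2) :=
        ⟨(u, i), rfl⟩
      rw [hrange'] at h
      exact h
    refine ⟨n + 1, Fin.cons x d', ?_, ?_, ?_⟩
    · rw [Nat.mul_succ, ← hcard']
      omega
    · rintro ⟨u, i⟩ ⟨v, j⟩ h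
      simp only at h
      rcases Fin.eq_zero_or_eq_succ i with rfl | ⟨i', rfl⟩ <;>
        rcases Fin.eq_zero_or_eq_succ j with rfl | ⟨j', rfl⟩
      · simp only [Fin.cons_zero] at h
        have := horb h
        subst this
        rfl
      · simp only [Fin.cons_zero, Fin.cons_succ] at h
        have hmem := hmemD'ran v j'
        rw [← h] at hmem
        exact absurd (hmemO u) (Finset.mem_sdiff.mp hmem).2
      · simp only [Fin.cons_zero, Fin.cons_succ] at h
        have hmem := hmemD'ran u i'
        rw [h] at hmem
        exact absurd (hmemO v) (Finset.mem_sdiff.mp hmem).2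
      · simp only [Fin.cons_succ] at h
        have h12 : ((u, i') : Fin (m + 1) × Fin n) = (v, j') := hinj' h
        have h1 : u = v := congrArg Prod.fst h12
        have h2 : i' = j' := congrArg Prod.snd h12
        subst h1; subst h2; rfl
    · ext y
      simp only [Set.mem_range, Finset.mem_coe]
      constructor
      · rintro ⟨⟨u, i⟩, rfl⟩
        rcases Fin.eq_zero_or_eq_succ i with rfl | ⟨i', rfl⟩
        · simp only [Fin.cons_zero]
          exact hOsub (hmemO u)
        · simp only [Fin.cons_succ]
          exact (Finset.mem_sdiff.mp (hmemD'ran u i')).1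
      · intro hy
        by_cases hyO : y ∈ O
        · simp only [hO, Finset.mem_image] at hyO
          obtain ⟨u, -, rfl⟩ := hyO
          exact ⟨(u, 0), by simp⟩
        · have h1 : y ∈ D' := Finset.mem_sdiff.mpr ⟨hy, hyO⟩
          have h2 : y ∈ Set.range (fun ui : Fin (m + 1) × Fin n => P ^ (ui.1 : ℕ) * d' ui.2) := by
            rw [hrange']
            exact h1
          obtain ⟨⟨u, i⟩, rfl⟩ := h2
          exact ⟨(u, i.succ), by simp⟩

/-- Corollary 4.3: under the hypotheses on the primes `p` and `m + 1`, the elements of a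
Frobenius difference set `D ⊆ ZMod ℓ` of cardinality `q` can be ordered in a Frobenius
compatible way: there is `d : Fin k → ZMod ℓ`, `k = q/(m+1)`, such that
`(u, i) ↦ p^u · d(i)` is injective with image exactly `D`. -/
theorem stmt_18 (p m ℓ q k : ℕ) (hp : p.Prime) (hm1 : (m + 1).Prime) (hm : 1 ≤ m)
    (hne : p ≠ m + 1) (hmod : ¬ p ≡ 1 [MOD m + 1])
    (hℓ : ℓ = (p ^ (m + 1) - 1) / (p - 1)) (hq : q = (p ^ m - 1) / (p - 1))
    (hk : k = q / (m + 1))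
    (D : Finset (ZMod ℓ)) (hcard : D.card = q)
    (hfrob : D.image (fun x => (p : ZMod ℓ) * x) = D) :
    ∃ d : Fin k → ZMod ℓ,
      Function.Injective
        (fun ui : Fin (m + 1) × Fin k => (p : ZMod ℓ) ^ (ui.1 : ℕ) * d ui.2) ∧
      Set.range
        (fun ui : Fin (m + 1) × Fin k => (p : ZMod ℓ) ^ (ui.1 : ℕ) * d ui.2) = ↑D := by
  have hp2 : 2 ≤ p := hp.two_le
  -- geometric sum identities
  have gℓ := geom_aux p hp2 (m + 1)
  have gq := geom_aux p hp2 m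
  have hℓeq : ℓ = ∑ i ∈ Finset.range (m + 1), p ^ i := by
    rw [hℓ, ← gℓ, Nat.mul_div_cancel_left _ (by omega : 0 < p - 1)]
  have hqeq : q = ∑ i ∈ Finset.range m, p ^ i := by
    rw [hq, ← gq, Nat.mul_div_cancel_left _ (by omega : 0 < p - 1)]
  have hℓpos : 0 < ℓ := by
    rw [hℓeq]
    have : p ^ 0 ≤ ∑ i ∈ Finset.range (m + 1), p ^ i :=
      Finset.single_le_sum (f := fun i => p ^ i) (fun i _ => Nat.zero_le _)
        (Finset.mem_range.mpr (by omega))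
    simpa using Nat.lt_of_lt_of_le Nat.one_pos (by simpa using this)
  haveI : NeZero ℓ := ⟨by omega⟩
  have hℓdvd : ℓ ∣ p ^ (m + 1) - 1 := ⟨p - 1, by rw [hℓeq, mul_comm]; exact gℓ.symm⟩
  have hP1 : (p : ZMod ℓ) ^ (m + 1) = 1 := by
    have hc : ((p ^ (m + 1) - 1 : ℕ) : ZMod ℓ) = 0 :=
      (ZMod.natCast_eq_zero_iff _ _).mpr hℓdvd
    rw [Nat.cast_sub (Nat.one_le_pow _ _ (by omega)), Nat.cast_pow, Nat.cast_one] at hc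
    rwa [sub_eq_zero] at hc
  have hpml : ∀ a : ℕ, (p : ZMod ℓ) ^ a = (p : ZMod ℓ) ^ (a % (m + 1)) := by
    intro a
    conv_lhs => rw [← Nat.div_add_mod a (m + 1)]
    rw [pow_add, pow_mul, hP1, one_pow, one_mul]
  -- p - 1 is a unit mod ℓ
  have hnd : ¬ (m + 1) ∣ (p - 1) := by
    intro hdvd
    exact hmod (((Nat.modEq_iff_dvd' (by omega : 1 ≤ p)).mpr hdvd).symm)
  have cop_m : Nat.Coprime (m + 1) (p - 1) := (Nat.Prime.coprime_iff_not_dvd hm1).mpr hnd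
  have hmodsum : ∀ n : ℕ, (∑ i ∈ Finset.range n, p ^ i) ≡ n [MOD p - 1] := by
    intro n
    induction n with
    | zero => rw [Finset.sum_range_zero]
    | succ n ihn =>
      rw [Finset.sum_range_succ]
      have hp1 : p ≡ 1 [MOD p - 1] := ((Nat.modEq_iff_dvd' (by omega : 1 ≤ p)).mpr dvd_rfl).symm
      have hpn : p ^ n ≡ 1 [MOD p - 1] := by simpa using hp1.pow n
      exact Nat.ModEq.add ihn hpn
  have hcopℓ : Nat.Coprime (p - 1) ℓ := by
    have hmodℓ : ℓ % (p - 1) = (m + 1) % (p - 1) := by rw [hℓeq]; exact hmodsum (m + 1)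
    unfold Nat.Coprime
    rw [Nat.gcd_rec (p - 1) ℓ, hmodℓ, ← Nat.gcd_rec (p - 1) (m + 1)]
    exact cop_m.symm
  have hPu : IsUnit ((p : ZMod ℓ) - 1) := by
    have h := (ZMod.isUnit_iff_coprime (p - 1) ℓ).mpr hcopℓ
    rwa [Nat.cast_sub (by omega : 1 ≤ p), Nat.cast_one] at h
  have hPunitℓ : IsUnit (p : ZMod ℓ) :=
    IsUnit.of_mul_eq_one ((p : ZMod ℓ) ^ m) (by rw [← pow_succ']; exact hP1)
  -- fixed points are zero
  have hfixall : ∀ x : ZMod ℓ, ∀ u, 0 < u → u ≤ m → (p : ZMod ℓ) ^ u * x = x → x = 0 := by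
    intro x u hu hum h
    have hcop_u : Nat.Coprime u (m + 1) :=
      Nat.Coprime.symm ((hm1.coprime_iff_not_dvd).mpr
        (fun hdvd => by have := Nat.le_of_dvd hu hdvd; omega))
    obtain ⟨v, -, hv⟩ := Nat.exists_mul_mod_eq_one_of_coprime hcop_u (by omega)
    have hj : ∀ j : ℕ, (p : ZMod ℓ) ^ (u * j) * x = x := by
      intro j
      induction j with
      | zero => simp
      | succ j ihj =>
        rw [Nat.mul_succ, pow_add, mul_assoc, h]
        exact ihj
    have h1 := hj v
    rw [hpml (u * v), hv, pow_one] at h1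
    have h2 : ((p : ZMod ℓ) - 1) * x = 0 := by rw [sub_mul, one_mul, h1, sub_self]
    exact (hPu.mul_right_eq_zero).mp h2
  -- m + 1 divides q
  haveI : Fact (m + 1).Prime := ⟨hm1⟩
  have hgq : (p - 1) * q = p ^ m - 1 := by rw [hqeq]; exact gq
  have hpm0 : (p : ZMod (m + 1)) ≠ 0 := by
    intro h
    have hd : (m + 1) ∣ p := (ZMod.natCast_eq_zero_iff _ _).mp h
    exact hne ((Nat.prime_dvd_prime_iff_eq hm1 hp).mp hd).symm
  have hferm : (p : ZMod (m + 1)) ^ m = 1 := by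
    have h := ZMod.pow_card_sub_one_eq_one hpm0
    simpa using h
  have hp1ne : (p : ZMod (m + 1)) - 1 ≠ 0 := by
    rw [sub_ne_zero]
    intro h
    apply hmod
    have h2 : (p : ZMod (m + 1)) = ((1 : ℕ) : ZMod (m + 1)) := by simpa using h
    exact (ZMod.natCast_eq_natCast_iff _ _ _).mp h2
  have hdvdq : (m + 1) ∣ q := by
    have hc := congrArg (Nat.cast : ℕ → ZMod (m + 1)) hgq
    rw [Nat.cast_mul, Nat.cast_sub (by omega : 1 ≤ p),
      Nat.cast_sub (Nat.one_le_pow _ _ (by omega)), Nat.cast_pow, Nat.cast_one] at hc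
    rw [hferm, sub_self] at hc
    have hq0 : (q : ZMod (m + 1)) = 0 := by
      rcases mul_eq_zero.mp hc with h | h
      · exact absurd h hp1ne
      · exact h
    exact (ZMod.natCast_eq_zero_iff _ _).mp hq0
  -- closure of D
  have hcl : ∀ x ∈ D, (p : ZMod ℓ) * x ∈ D := by
    intro x hx
    rw [← hfrob]
    exact Finset.mem_image_of_mem _ hx
  -- 0 is not in D
  have h0D : (0 : ZMod ℓ) ∉ D := by
    intro h0
    have hq1 : 1 ≤ q := by rw [← hcard]; exact Finset.card_pos.mpr ⟨0, h0⟩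
    set E := D.erase 0 with hE
    have hclE : ∀ x ∈ E, (p : ZMod ℓ) * x ∈ E := by
      intro x hx
      rw [hE, Finset.mem_erase] at hx ⊢
      exact ⟨fun hz => hx.1 ((hPunitℓ.mul_right_eq_zero).mp hz), hcl x hx.2⟩
    have hnfE : ∀ x ∈ E, ∀ u, 0 < u → u ≤ m → (p : ZMod ℓ) ^ u * x ≠ x := by
      intro x hx u h1 h2 h3
      exact (Finset.mem_erase.mp hx).1 (hfixall x u h1 h2 h3)
    obtain ⟨n, -, hEcard, -, -⟩ := peel (p : ZMod ℓ) m hP1 E.card E le_rfl hclE hnfE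
    have hEq : E.card = q - 1 := by rw [hE, Finset.card_erase_of_mem h0, hcard]
    have hsub1 : q - (q - 1) = 1 := by omega
    have d2 : (m + 1) ∣ q - 1 := by rw [← hEq]; exact ⟨n, hEcard⟩
    have d3 : (m + 1) ∣ q - (q - 1) := Nat.dvd_sub hdvdq d2
    rw [hsub1] at d3
    have := Nat.le_of_dvd one_pos d3
    omega
  have hnfD : ∀ x ∈ D, ∀ u, 0 < u → u ≤ m → (p : ZMod ℓ) ^ u * x ≠ x := by
    intro x hx u h1 h2 h3
    have hx0 : x = 0 := hfixall x u h1 h2 h3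
    rw [hx0] at hx
    exact h0D hx
  obtain ⟨n, d, hcardn, hinj, hrange⟩ := peel (p : ZMod ℓ) m hP1 D.card D le_rfl hcl hnfD
  have hkn : k = n := by
    rw [hk]
    rw [hcard] at hcardn
    rw [hcardn, Nat.mul_div_cancel_left _ (by omega : 0 < m + 1)]
  subst hkn
  exact ⟨d, hinj, hrange⟩
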